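/- arXiv:2104.12974 — 2 statements merged into one kernel-verified Lean document; each statement's English description precedes it below -/
import Mathlib

section
/- Let p ≥ 1 and q ≥ 2 be integers and let j be an integer with 2 ≤ j ≤ p + q. Then ∑_{i=j−1}^{p+q−1} A_{p,q−1}(i) + D = A_{p,q}(j) + C(2p−j+1, p)·C(2q−3, q−1), where D := C(2p−j, p−1)·C(2q−2, q−1) if j−1 ≤ p, and D := 0 otherwise. -/
/-- Binomial coefficient on integers: `C a b = 0` whenever `a < b` or `a < 0`,
    and otherwise the usual binomial coefficient. -/
def intChoose (a b : ℤ) : ℤ :=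
  if a < b ∨ a < 0 then 0 else (a.toNat.choose b.toNat : ℤ)

/-- `F p s = C (2p − s − 1) (p − 1)`. -/
def F (p s : ℤ) : ℤ := intChoose (2 * p - s - 1) (p - 1)

/-- `P s t = C (s + t − 2) (s − 1)` if `s, t ≥ 1`, and `0` otherwise. -/
def P (s t : ℤ) : ℤ :=
  if 1 ≤ s ∧ 1 ≤ t then intChoose (s + t - 2) (s - 1) else 0

/-- `A p q j = ∑_{s=1}^{p} ∑_{t=1}^{q, s+t=j} F_p(s)·F_q(t)`. -/
noncomputable def A (p q j : ℤ) : ℤ :=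
  ∑ s ∈ Finset.Icc (1 : ℤ) p, ∑ t ∈ Finset.Icc (1 : ℤ) q,
    if s + t = j then F p s * F q t else 0

/-- `B p q j = ∑_{s=1}^{p} ∑_{t=1}^{q} F_p(s)·F_q(t)·P(s−j+1, t)`. -/
noncomputable def B (p q j : ℤ) : ℤ :=
  ∑ s ∈ Finset.Icc (1 : ℤ) p, ∑ t ∈ Finset.Icc (1 : ℤ) q,
    F p s * F q t * P (s - j + 1) t

/-- `Cc p q j = ∑_{s=1}^{p} ∑_{t=j}^{q} F_p(s)·F_q(t)·P(s, t−j+1)`. -/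
noncomputable def Cc (p q j : ℤ) : ℤ :=
  ∑ s ∈ Finset.Icc (1 : ℤ) p, ∑ t ∈ Finset.Icc j q,
    F p s * F q t * P s (t - j + 1)

lemma intChoose_zero_of_lt {a b : ℤ} (h : a < b) : intChoose a b = 0 := by
  simp [intChoose, h]

lemma intChoose_nonneg_eq {a b : ℤ} (ha : 0 ≤ a) (hb : 0 ≤ b) :
    intChoose a b = (a.toNat.choose b.toNat : ℤ) := by
  unfold intChoose
  split_ifs with h
  · rcases h with h | h
    · rw [Nat.choose_eq_zero_of_lt (by omega)]; simp
    · omega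
  · rfl

lemma pascal (n k : ℤ) (hk : 1 ≤ k) :
    intChoose n k = intChoose (n-1) (k-1) + intChoose (n-1) k := by
  rcases lt_or_ge n k with h | h
  · rw [intChoose_zero_of_lt h, intChoose_zero_of_lt (by omega),
      intChoose_zero_of_lt (by omega)]
    ring
  · have hn : 1 ≤ n := le_trans hk h
    rw [intChoose_nonneg_eq (by omega) (by omega),
      intChoose_nonneg_eq (by omega) (by omega),
      intChoose_nonneg_eq (by omega) (by omega)]
    have h1 : n.toNat = (n-1).toNat + 1 := by omega
    have h2 : k.toNat = (k-1).toNat + 1 := by omega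
    rw [h1, h2, Nat.choose_succ_succ]
    push_cast; ring

lemma icc_insert (a b : ℤ) (h : a ≤ b) :
    Finset.Icc a b = insert a (Finset.Icc (a+1) b) := by
  ext t; simp [Finset.mem_Icc]; omega

lemma telescope (g : ℤ → ℤ) : ∀ (n : ℕ) (a b : ℤ), b + 1 - a = n →
    ∑ t ∈ Finset.Icc a b, (g t - g (t+1)) = g a - g (b+1)
  | 0, a, b, h => by
    have ha : a = b + 1 := by omega
    rw [Finset.Icc_eq_empty (by omega), Finset.sum_empty, ha, sub_self]
  | (n+1), a, b, h => by
    have hab : a ≤ b := by omega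
    rw [icc_insert a b hab, Finset.sum_insert (by simp [Finset.mem_Icc]),
      telescope g n (a+1) b (by omega)]
    ring

lemma hockey_aux (p : ℤ) (hp : 1 ≤ p) : ∀ (n : ℕ) (a : ℤ), 1 ≤ a → p + 1 - a = n →
    ∑ s ∈ Finset.Icc a p, intChoose (2*p - s - 1) (p-1) = intChoose (2*p - a) p
  | 0, a, ha, h => by
    have : a = p + 1 := by omega
    subst this
    rw [Finset.Icc_eq_empty (by omega), Finset.sum_empty,
      intChoose_zero_of_lt (by omega)]
  | (n+1), a, ha, h => by
    have hab : a ≤ p := by omega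
    rw [icc_insert a p hab, Finset.sum_insert (by simp [Finset.mem_Icc]),
      hockey_aux p hp n (a+1) (by omega) (by omega),
      pascal (2*p - a) p (by omega)]
    have e1 : 2*p - a - 1 = 2*p - (a+1) := by ring
    rw [e1]

lemma hockey (p : ℤ) (hp : 1 ≤ p) (a : ℤ) (ha : 1 ≤ a) :
    ∑ s ∈ Finset.Icc a p, intChoose (2*p - s - 1) (p-1) = intChoose (2*p - a) p := by
  rcases le_or_gt a (p+1) with h | h
  · exact hockey_aux p hp (p+1-a).toNat a ha (by omega)
  · rw [Finset.Icc_eq_empty (by omega), Finset.sum_empty,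
      intChoose_zero_of_lt (by omega)]

-- sum of F_{q-1} from a to q-1 equals F_q(a+1) = C(2q-a-2, q-1)
lemma sumF (q : ℤ) (hq : 2 ≤ q) (a : ℤ) (ha : 1 ≤ a) :
    ∑ t ∈ Finset.Icc a (q-1), intChoose (2*(q-1) - t - 1) (q-1-1)
      = intChoose (2*q - a - 2) (q-1) := by
  rcases le_or_gt a q with h | h
  · have key : ∀ t, intChoose (2*(q-1) - t - 1) (q-1-1)
        = intChoose (2*q - t - 2) (q-1) - intChoose (2*q - (t+1) - 2) (q-1) := by
      intro t
      have := pascal (2*q - t - 2) (q-1) (by omega)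
      have e1 : 2*q - t - 2 - 1 = 2*q - (t+1) - 2 := by ring
      have e2 : 2*(q-1) - t - 1 = 2*q - (t+1) - 2 := by ring
      have e3 : q - 1 - 1 = q - 2 := by ring
      rw [e2, e3]
      have e4 : (2*q - t - 2 - 1 : ℤ) = 2*q - (t+1) - 2 := by ring
      have e5 : (q - 1 - 1 : ℤ) = q - 2 := by ring
      rw [e4, e5] at this
      omega
    rw [Finset.sum_congr rfl (fun t _ => key t),
      telescope (fun t => intChoose (2*q - t - 2) (q-1)) (q - a).toNat a (q-1) (by omega)]
    rw [intChoose_zero_of_lt (a := 2*q - (q-1+1) - 2) (by omega), sub_zero]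
  · rw [Finset.Icc_eq_empty (by omega), Finset.sum_empty,
      intChoose_zero_of_lt (by omega)]

lemma sum_if_le (a b c : ℤ) (hc : a ≤ c) (X : ℤ → ℤ) :
    ∑ t ∈ Finset.Icc a b, (if c ≤ t then X t else 0) = ∑ t ∈ Finset.Icc c b, X t := by
  rw [← Finset.sum_filter]
  congr 1
  ext t
  simp only [Finset.mem_filter, Finset.mem_Icc]
  omega


/-- for `p ≥ 1`, `q ≥ 2`, `2 ≤ j ≤ p + q`,
  `∑_{i=j−1}^{p+q−1} A_{p,q−1}(i) + D = A_{p,q}(j) + C(2p−j+1, p)·C(2q−3, q−1)`,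
  where `D = C(2p−j, p−1)·C(2q−2, q−1)` if `j−1 ≤ p`, else `D = 0`. -/
theorem sum_A_step (p q : ℤ) (hp : 1 ≤ p) (hq : 2 ≤ q)
    (j : ℤ) (hj2 : 2 ≤ j) (hjpq : j ≤ p + q) :
    (∑ i ∈ Finset.Icc (j - 1) (p + q - 1), A p (q - 1) i)
        + (if j - 1 ≤ p then intChoose (2 * p - j) (p - 1) * intChoose (2 * q - 2) (q - 1) else 0)
      = A p q j + intChoose (2 * p - j + 1) p * intChoose (2 * q - 3) (q - 1) := by
  have h1 : (∑ i ∈ Finset.Icc (j - 1) (p + q - 1), A p (q - 1) i)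
      = ∑ s ∈ Finset.Icc (1:ℤ) p,
          F p s * intChoose (2*q - (max 1 (j-1-s)) - 2) (q-1) := by
    unfold A
    rw [Finset.sum_comm]
    refine Finset.sum_congr rfl (fun s hs => ?_)
    rw [Finset.sum_comm]
    simp only [Finset.mem_Icc] at hs
    have e1 : ∀ t ∈ Finset.Icc (1:ℤ) (q-1),
        (∑ i ∈ Finset.Icc (j-1) (p+q-1), if s + t = i then F p s * F (q-1) t else 0)
        = if max 1 (j-1-s) ≤ t then F p s * F (q-1) t else 0 := by
      intro t ht
      simp only [Finset.mem_Icc] at ht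
      rw [Finset.sum_ite_eq (Finset.Icc (j-1) (p+q-1)) (s+t) (fun _ => F p s * F (q-1) t)]
      simp only [Finset.mem_Icc]
      by_cases hc : max 1 (j-1-s) ≤ t
      · rw [if_pos (by omega), if_pos hc]
      · rw [if_neg (by omega), if_neg hc]
    rw [Finset.sum_congr rfl e1,
      sum_if_le 1 (q-1) (max 1 (j-1-s)) (le_max_left _ _) (fun t => F p s * F (q-1) t)]
    simp only [F]
    rw [← Finset.mul_sum, sumF q hq _ (le_max_left _ _)]
  have h2 : A p q j = ∑ s ∈ Finset.Icc (1:ℤ) p,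
      if 1 ≤ j - s ∧ j - s ≤ q then F p s * F q (j-s) else 0 := by
    unfold A
    refine Finset.sum_congr rfl (fun s hs => ?_)
    have e2 : ∀ t ∈ Finset.Icc (1:ℤ) q,
        (if s + t = j then F p s * F q t else 0)
        = if j - s = t then F p s * F q t else 0 := by
      intro t ht
      by_cases h : s + t = j
      · rw [if_pos h, if_pos (by omega)]
      · rw [if_neg h, if_neg (by omega)]
    rw [Finset.sum_congr rfl e2,
      Finset.sum_ite_eq (Finset.Icc (1:ℤ) q) (j-s) (fun t => F p s * F q t)]
    simp only [Finset.mem_Icc]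
  have h3 : intChoose (2 * p - j + 1) p * intChoose (2 * q - 3) (q - 1)
      = ∑ s ∈ Finset.Icc (1:ℤ) p,
          (if j - 1 ≤ s then F p s * intChoose (2 * q - 3) (q - 1) else 0) := by
    rw [sum_if_le 1 p (j-1) (by omega) (fun s => F p s * intChoose (2 * q - 3) (q - 1)),
      ← Finset.sum_mul]
    congr 1
    simp only [F]
    rw [hockey p hp (j-1) (by omega)]
    congr 1
    ring
  have hD : (if j - 1 ≤ p then intChoose (2*p - j) (p-1) * intChoose (2*q-2) (q-1) else 0)
      = ∑ s ∈ Finset.Icc (1:ℤ) p,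
          (if s = j - 1 then intChoose (2*p - j) (p-1) * intChoose (2*q-2) (q-1) else 0) := by
    rw [Finset.sum_ite_eq' (Finset.Icc (1:ℤ) p) (j-1)
      (fun _ => intChoose (2*p - j) (p-1) * intChoose (2*q-2) (q-1))]
    simp only [Finset.mem_Icc]
    by_cases h : j - 1 ≤ p
    · rw [if_pos h, if_pos ⟨by omega, h⟩]
    · rw [if_neg h, if_neg (by omega)]
  rw [h1, h2, h3, hD, ← Finset.sum_add_distrib, ← Finset.sum_add_distrib]
  refine Finset.sum_congr rfl fun s hs => ?_
  simp only [Finset.mem_Icc] at hs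
  rcases lt_trichotomy s (j-1) with h | h | h
  · -- s < j - 1
    rw [max_eq_right (by omega : (1:ℤ) ≤ j - 1 - s),
      if_neg (by omega : ¬ s = j - 1), if_neg (by omega : ¬ j - 1 ≤ s)]
    by_cases hc : j - s ≤ q
    · rw [if_pos ⟨by omega, hc⟩]
      simp only [F]
      rw [show 2*q - (j - 1 - s) - 2 = 2 * q - (j - s) - 1 from by ring]
    · rw [if_neg (by omega),
        intChoose_zero_of_lt (a := 2*q - (j - 1 - s) - 2) (by omega)]
      ring
  · -- s = j - 1
    subst h
    rw [if_pos rfl, if_pos ⟨by omega, by omega⟩, if_pos le_rfl]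
    simp only [F]
    rw [show max 1 (j - 1 - (j-1)) = (1:ℤ) from by omega,
      show 2*q - 1 - 2 = 2*q - 3 from by ring,
      show 2*q - (j - (j-1)) - 1 = 2*q - 2 from by ring,
      show 2*p - (j-1) - 1 = 2*p - j from by ring]
    ring
  · -- s > j - 1
    rw [max_eq_left (by omega : j - 1 - s ≤ (1:ℤ)),
      if_neg (by omega : ¬ s = j - 1), if_neg (by omega : ¬ (1 ≤ j - s ∧ j - s ≤ q)),
      if_pos (by omega : j - 1 ≤ s),
      show 2*q - 1 - 2 = 2*q - 3 from by ring]
    ring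
end

section
/- For all integers p ≥ 1 and q ≥ 2, one has A_{p,q}(1) + B_{p,q}(1) + C_{p,q}(1) = 2·(A_{p,q}(2) + B_{p,q}(2) + C_{p,q}(2)). -/
lemma intChoose_nonneg (a b : ℤ) (ha : 0 ≤ a) (hb : 0 ≤ b) :
    intChoose a b = (a.toNat.choose b.toNat : ℤ) := by
  unfold intChoose
  split
  · rcases ‹a < b ∨ a < 0› with h | h
    · rw [Nat.choose_eq_zero_of_lt (by omega)]; simp
    · omega
  · rfl

lemma intChoose_pascal (a b : ℤ) (ha : 0 ≤ a) (hb : 0 ≤ b) :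
    intChoose (a + 1) (b + 1) = intChoose a b + intChoose a (b + 1) := by
  rw [intChoose_nonneg _ _ (by omega) (by omega), intChoose_nonneg _ _ ha hb,
    intChoose_nonneg _ _ ha (by omega)]
  have h1 : (a + 1).toNat = a.toNat + 1 := by omega
  have h2 : (b + 1).toNat = b.toNat + 1 := by omega
  rw [h1, h2, Nat.choose_succ_succ]
  push_cast; ring

lemma P_one_left (t : ℤ) (ht : 1 ≤ t) : P 1 t = 1 := by
  unfold P
  rw [if_pos (⟨le_refl 1, ht⟩ : (1:ℤ) ≤ 1 ∧ 1 ≤ t),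
    show (1:ℤ) + t - 2 = t - 1 by ring, show (1:ℤ) - 1 = 0 by ring,
    intChoose_nonneg _ _ (by omega) le_rfl]
  simp

lemma P_one_right (s : ℤ) (hs : 1 ≤ s) : P s 1 = 1 := by
  unfold P
  rw [if_pos (⟨hs, le_refl 1⟩ : (1:ℤ) ≤ s ∧ (1:ℤ) ≤ 1),
    show s + 1 - 2 = s - 1 by ring,
    intChoose_nonneg _ _ (by omega) (by omega)]
  simp [Nat.choose_self]

lemma P_nonpos_left (s t : ℤ) (hs : s ≤ 0) : P s t = 0 := by
  unfold P; rw [if_neg]; omega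

lemma P_nonpos_right (s t : ℤ) (ht : t ≤ 0) : P s t = 0 := by
  unfold P; rw [if_neg]; omega

lemma P_pascal (s t : ℤ) (hs : 1 ≤ s) (ht : 1 ≤ t) :
    P s t = P (s - 1) t + P s (t - 1) + (if s = 1 ∧ t = 1 then 1 else 0) := by
  by_cases hs1 : s = 1
  · subst hs1
    by_cases ht1 : t = 1
    · subst ht1
      norm_num [P_one_left, P_nonpos_left, P_nonpos_right]
    · rw [if_neg (by omega), P_one_left t ht, show (1:ℤ) - 1 = 0 by ring,
        P_nonpos_left 0 t le_rfl, P_one_left (t - 1) (by omega)]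
      ring
  · by_cases ht1 : t = 1
    · subst ht1
      rw [if_neg (by omega), P_one_right s hs, P_one_right (s - 1) (by omega),
        show (1:ℤ) - 1 = 0 by ring, P_nonpos_right s 0 le_rfl]
      ring
    · have key := intChoose_pascal (s + t - 3) (s - 2) (by omega) (by omega)
      unfold P
      rw [if_pos (show (1:ℤ) ≤ s ∧ 1 ≤ t from ⟨by omega, by omega⟩),
        if_pos (show (1:ℤ) ≤ s - 1 ∧ 1 ≤ t from ⟨by omega, by omega⟩),
        if_pos (show (1:ℤ) ≤ s ∧ 1 ≤ t - 1 from ⟨by omega, by omega⟩),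
        if_neg (show ¬(s = 1 ∧ t = 1) by omega),
        show s - 1 + t - 2 = s + t - 3 by ring,
        show s + (t - 1) - 2 = s + t - 3 by ring,
        show s - 1 - 1 = s - 2 by ring,
        show s + t - 2 = s + t - 3 + 1 by ring,
        show s - 1 = s - 2 + 1 by ring, key]
      ring


/-- for `p ≥ 1`, `q ≥ 2`,
  `A_{p,q}(1) + B_{p,q}(1) + C_{p,q}(1) = 2·(A_{p,q}(2) + B_{p,q}(2) + C_{p,q}(2))`. -/
theorem value_at_one_eq_twice_value_at_two (p q : ℤ) (hp : 1 ≤ p) (hq : 2 ≤ q) :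
    A p q 1 + B p q 1 + Cc p q 1 = 2 * (A p q 2 + B p q 2 + Cc p q 2) := by
  have hA1 : A p q 1 = 0 := by
    unfold A
    refine Finset.sum_eq_zero fun s hs => Finset.sum_eq_zero fun t ht => ?_
    simp only [Finset.mem_Icc] at hs ht
    rw [if_neg (by omega)]
  have hBC : B p q 1 = Cc p q 1 := by
    unfold B Cc
    refine Finset.sum_congr rfl fun s hs => Finset.sum_congr rfl fun t ht => ?_
    rw [show s - 1 + 1 = s by ring, show t - 1 + 1 = t by ring]
  have hA2 : A p q 2 = F p 1 * F q 1 := by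
    unfold A
    rw [Finset.sum_eq_single_of_mem 1 (Finset.mem_Icc.mpr ⟨le_refl 1, hp⟩)
      (fun s hs hne => Finset.sum_eq_zero fun t ht => by
        simp only [Finset.mem_Icc] at hs ht
        rw [if_neg (by omega)]),
      Finset.sum_eq_single_of_mem 1 (Finset.mem_Icc.mpr ⟨le_refl 1, by omega⟩)
      (fun t ht hne => by
        simp only [Finset.mem_Icc] at ht
        rw [if_neg (by omega)]),
      if_pos (by norm_num)]
  have hInd : (∑ s ∈ Finset.Icc (1 : ℤ) p, ∑ t ∈ Finset.Icc (1 : ℤ) q,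
      if s = 1 ∧ t = 1 then F p s * F q t else 0) = F p 1 * F q 1 := by
    rw [Finset.sum_eq_single_of_mem 1 (Finset.mem_Icc.mpr ⟨le_refl 1, hp⟩)
      (fun s hs hne => Finset.sum_eq_zero fun t ht => by
        rw [if_neg (by simp [hne])]),
      Finset.sum_eq_single_of_mem 1 (Finset.mem_Icc.mpr ⟨le_refl 1, by omega⟩)
      (fun t ht hne => by rw [if_neg (by simp [hne])]),
      if_pos ⟨rfl, rfl⟩]
  have hB2 : B p q 2 = ∑ s ∈ Finset.Icc (1 : ℤ) p, ∑ t ∈ Finset.Icc (1 : ℤ) q,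
      F p s * F q t * P (s - 1) t := by
    unfold B
    refine Finset.sum_congr rfl fun s hs => Finset.sum_congr rfl fun t ht => ?_
    rw [show s - 2 + 1 = s - 1 by ring]
  have hC2 : Cc p q 2 = ∑ s ∈ Finset.Icc (1 : ℤ) p, ∑ t ∈ Finset.Icc (1 : ℤ) q,
      F p s * F q t * P s (t - 1) := by
    unfold Cc
    refine Finset.sum_congr rfl fun s hs => ?_
    have hsub : Finset.Icc (2:ℤ) q ⊆ Finset.Icc 1 q :=
      Finset.Icc_subset_Icc (by norm_num) le_rfl
    rw [Finset.sum_subset hsub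
      (fun t ht hnt => by
        simp only [Finset.mem_Icc] at ht hnt
        have : t = 1 := by omega
        subst this
        rw [show (1:ℤ) - 2 + 1 = 0 by ring, P_nonpos_right s 0 le_rfl, mul_zero])]
    refine Finset.sum_congr rfl fun t ht => ?_
    rw [show t - 2 + 1 = t - 1 by ring]
  have hkey : B p q 1 = A p q 2 + B p q 2 + Cc p q 2 := by
    have expand : B p q 1 = ∑ s ∈ Finset.Icc (1 : ℤ) p, ∑ t ∈ Finset.Icc (1 : ℤ) q,
        (F p s * F q t * P (s - 1) t + F p s * F q t * P s (t - 1)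
          + (if s = 1 ∧ t = 1 then F p s * F q t else 0)) := by
      unfold B
      refine Finset.sum_congr rfl fun s hs => Finset.sum_congr rfl fun t ht => ?_
      simp only [Finset.mem_Icc] at hs ht
      rw [show s - 1 + 1 = s by ring, P_pascal s t hs.1 ht.1]
      split_ifs with h <;> ring
    rw [expand]
    simp only [Finset.sum_add_distrib]
    rw [hA2, hInd, hB2, hC2]
    ring
  linarith [hA1, hBC, hkey]
end
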